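/- Let σ > 0, 0 ≤ a and C > 0 with a + C ≤ 1, and define the slab base classifier f* : ℝ^d → {0,1} by f*(z) = 1 if σΦ⁻¹(a) ≤ z₁ ≤ σΦ⁻¹(a + C) and f*(z) = 0 otherwise. Then the Gaussian-smoothed function p(x) := E_{ε ~ N(0,σ²I_d)}[f*(x + ε)] satisfies: p(0) = C; ∇ₓ p(0) = −σ⁻¹(Φ'(Φ⁻¹(a + C)) − Φ'(Φ⁻¹(a))) e₁ where e₁ is the first standard basis vector; and for every ρ ≥ 0, p(ρ e₁) = Φ(Φ⁻¹(a + C) − ρ/σ) − Φ(Φ⁻¹(a) − ρ/σ). In particular, the second-order smoothing lower bound is attained with equality by this classifier. -/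

import Mathlib

open MeasureTheory ProbabilityTheory Real

noncomputable section

/-- The standard normal cumulative distribution function Φ. -/
def Phi (x : ℝ) : ℝ := ((gaussianReal 0 1) (Set.Iic x)).toReal

/-- The inverse Φ⁻¹ of the standard normal CDF (meaningful on (0,1)). -/
def PhiInv : ℝ → ℝ := Function.invFun Phi

/-- The standard normal probability density function Φ'. -/
def stdPdf (x : ℝ) : ℝ := Real.exp (-x ^ 2 / 2) / Real.sqrt (2 * Real.pi)

/-- `Φ(Φ⁻¹(y) - c)` with the conventions `Φ⁻¹(0) = -∞`, `Φ⁻¹(1) = +∞`,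
`Φ(-∞ - c) = 0`, `Φ(+∞ - c) = 1`. -/
def PhiShift (c y : ℝ) : ℝ := if y ≤ 0 then 0 else if 1 ≤ y then 1 else Phi (PhiInv y - c)

/-- `Φ'(Φ⁻¹(y))` with the conventions `Φ⁻¹(0) = -∞`, `Φ⁻¹(1) = +∞`, `Φ'(±∞) = 0`. -/
def pdfAtQuantile (y : ℝ) : ℝ := if y ≤ 0 then 0 else if 1 ≤ y then 0 else stdPdf (PhiInv y)

/-- The isotropic Gaussian measure `N(0, σ²I_d)` on `ℝ^d`. -/
def gaussPi (σ : ℝ) (d : ℕ) : Measure (EuclideanSpace ℝ (Fin d)) :=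
  Measure.map (MeasurableEquiv.toLp 2 (Fin d → ℝ))
    (Measure.pi fun _ : Fin d => gaussianReal 0 (Real.toNNReal (σ ^ 2)))

/-- The Gaussian-smoothed function `p_a(x) = E_{ε ~ N(0,σ²I_d)}[f(x+ε)]`. -/
def smoothed (σ : ℝ) (d : ℕ) (f : EuclideanSpace ℝ (Fin d) → ℝ)
    (x : EuclideanSpace ℝ (Fin d)) : ℝ := ∫ ε, f (x + ε) ∂(gaussPi σ d)

/-- A centered real random variable `Z` is `(a,b)`-subexponential if `E[Z] = 0` and
`E[exp (l Z)] ≤ exp (a² l² / 2)` for all `|l| ≤ 1/b`. -/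
def IsSubexponential {Ω : Type*} [MeasurableSpace Ω] (μ : Measure Ω) (Z : Ω → ℝ)
    (a b : ℝ) : Prop :=
  (∫ ω, Z ω ∂μ) = 0 ∧
    ∀ l : ℝ, |l| ≤ 1 / b → (∫ ω, Real.exp (l * Z ω) ∂μ) ≤ Real.exp (a ^ 2 * l ^ 2 / 2)

lemma stdPdf_eq : stdPdf = gaussianPDFReal 0 1 := by
  funext x
  simp only [stdPdf, gaussianPDFReal, NNReal.coe_one, mul_one, sub_zero]
  rw [div_eq_inv_mul]

lemma continuous_stdPdf : Continuous stdPdf := by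
  unfold stdPdf
  exact (Real.continuous_exp.comp (by continuity)).div_const _

lemma integrable_stdPdf : Integrable stdPdf := stdPdf_eq ▸ integrable_gaussianPDFReal 0 1

lemma Phi_eq_integral (x : ℝ) : Phi x = ∫ t in Set.Iic x, stdPdf t := by
  rw [Phi, gaussianReal_apply_eq_integral 0 one_ne_zero, ENNReal.toReal_ofReal
    (setIntegral_nonneg measurableSet_Iic fun t _ => gaussianPDFReal_nonneg 0 1 t), stdPdf_eq]

lemma hasDerivAt_Phi (x : ℝ) : HasDerivAt Phi (stdPdf x) x := by
  have hint : ∀ y : ℝ, Phi y = Phi 0 + ∫ t in (0:ℝ)..y, stdPdf t := by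
    intro y
    rw [← intervalIntegral.integral_Iic_sub_Iic integrable_stdPdf.integrableOn
      integrable_stdPdf.integrableOn, Phi_eq_integral, Phi_eq_integral]
    ring
  have h1 : HasDerivAt (fun y => Phi 0 + ∫ t in (0:ℝ)..y, stdPdf t) (stdPdf x) x := by
    refine HasDerivAt.const_add _ ?_
    exact intervalIntegral.integral_hasDerivAt_right
      integrable_stdPdf.intervalIntegrable
      (continuous_stdPdf.stronglyMeasurable.stronglyMeasurableAtFilter)
      continuous_stdPdf.continuousAt
  exact (funext hint : Phi = _) ▸ h1

lemma continuous_Phi : Continuous Phi :=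
  continuous_iff_continuousAt.2 fun x => (hasDerivAt_Phi x).continuousAt

lemma monotone_Phi : Monotone Phi := fun u v h =>
  ENNReal.toReal_mono (measure_ne_top _ _) (measure_mono (Set.Iic_subset_Iic.2 h))

lemma tendsto_Phi_atTop : Filter.Tendsto Phi Filter.atTop (nhds 1) := by
  have h := tendsto_measure_Iic_atTop (μ := gaussianReal 0 1)
  have h2 := (ENNReal.tendsto_toReal (by simp : (gaussianReal 0 1) Set.univ ≠ ⊤)).comp h
  rw [measure_univ, ENNReal.toReal_one] at h2
  exact h2

lemma tendsto_Phi_atBot : Filter.Tendsto Phi Filter.atBot (nhds 0) := by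
  have hI : ⋂ x : ℝ, Set.Iic x = ∅ := by
    ext y
    simp only [Set.mem_iInter, Set.mem_Iic, Set.mem_empty_iff_false, iff_false, not_forall, not_le]
    exact ⟨y - 1, by linarith⟩
  have h := tendsto_measure_iInter_atBot (μ := gaussianReal 0 1)
    (fun x => measurableSet_Iic.nullMeasurableSet)
    (fun _ _ h => Set.Iic_subset_Iic.2 h) ⟨0, measure_ne_top _ _⟩
  rw [hI] at h
  have h2 := (ENNReal.tendsto_toReal (by simp : (gaussianReal 0 1) ∅ ≠ ⊤)).comp h
  rw [measure_empty, ENNReal.toReal_zero] at h2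
  exact h2

lemma Phi_phiInv {y : ℝ} (h0 : 0 < y) (h1 : y < 1) : Phi (PhiInv y) = y := by
  apply Function.invFun_eq
  obtain ⟨b, hb⟩ := (tendsto_Phi_atTop.eventually (lt_mem_nhds h1)).exists
  obtain ⟨a, ha⟩ := (tendsto_Phi_atBot.eventually (gt_mem_nhds h0)).exists
  exact intermediate_value_univ a b continuous_Phi ⟨ha.le, hb.le⟩

-- nu lemmas
variable {σ : ℝ}

lemma hv (hσ : 0 < σ) : Real.toNNReal (σ^2) ≠ 0 :=
  ne_of_gt (Real.toNNReal_pos.2 (by positivity))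

lemma gauss_map (hσ : 0 < σ) :
    gaussianReal 0 (Real.toNNReal (σ^2)) = (gaussianReal 0 1).map (σ * ·) := by
  rw [gaussianReal_map_const_mul]
  congr 1
  · ring
  · rw [← NNReal.coe_inj]
    push_cast
    rw [Real.coe_toNNReal _ (sq_nonneg σ)]
    ring

lemma nu_Iic (hσ : 0 < σ) (b : ℝ) :
    ((gaussianReal 0 (Real.toNNReal (σ^2))) (Set.Iic b)).toReal = Phi (b / σ) := by
  rw [gauss_map hσ, Measure.map_apply (measurable_const_mul σ) measurableSet_Iic]
  have h : (σ * ·) ⁻¹' Set.Iic b = Set.Iic (b / σ) := by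
    ext t
    simp only [Set.mem_preimage, Set.mem_Iic]
    rw [mul_comm, ← le_div_iff₀ hσ]
  rw [h]; rfl

lemma nu_singleton (hσ : 0 < σ) (b : ℝ) :
    (gaussianReal 0 (Real.toNNReal (σ^2))) {b} = 0 :=
  gaussianReal_absolutelyContinuous 0 (hv hσ) (measure_singleton b)

lemma nu_Ici (hσ : 0 < σ) (b : ℝ) :
    ((gaussianReal 0 (Real.toNNReal (σ^2))) (Set.Ici b)).toReal = 1 - Phi (b / σ) := by
  have h1 : (gaussianReal 0 (Real.toNNReal (σ^2))) (Set.Iio b)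
      = (gaussianReal 0 (Real.toNNReal (σ^2))) (Set.Iic b) :=
    measure_congr (Iio_ae_eq_Iic' (nu_singleton hσ b))
  rw [← Set.compl_Iio, measure_compl measurableSet_Iio (measure_ne_top _ _), measure_univ, h1,
    ENNReal.toReal_sub_of_le prob_le_one (by simp), ENNReal.toReal_one, nu_Iic hσ]

lemma nu_Icc (hσ : 0 < σ) {b c : ℝ} (hbc : b ≤ c) :
    ((gaussianReal 0 (Real.toNNReal (σ^2))) (Set.Icc b c)).toReal
      = Phi (c / σ) - Phi (b / σ) := by
  have h1 : (gaussianReal 0 (Real.toNNReal (σ^2))) (Set.Icc b c)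
      = (gaussianReal 0 (Real.toNNReal (σ^2))) (Set.Ioc b c) :=
    (measure_congr (Ioc_ae_eq_Icc' (nu_singleton hσ b))).symm
  rw [h1, ← Set.Iic_sdiff_Iic,
    measure_diff (Set.Iic_subset_Iic.2 hbc) measurableSet_Iic.nullMeasurableSet
      (measure_ne_top _ _),
    ENNReal.toReal_sub_of_le (measure_mono (Set.Iic_subset_Iic.2 hbc)) (measure_ne_top _ _),
    nu_Iic hσ, nu_Iic hσ]

lemma pi_map_eval {d : ℕ} (ν : Measure ℝ) [IsProbabilityMeasure ν] (i : Fin d) :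
    (Measure.pi fun _ : Fin d => ν).map (fun f => f i) = ν := by
  ext s hs
  rw [Measure.map_apply (measurable_pi_apply i) hs]
  have h1 : (fun f : Fin d → ℝ => f i) ⁻¹' s =
      Set.pi Set.univ (Function.update (fun _ : Fin d => (Set.univ : Set ℝ)) i s) := by
    ext f
    simp only [Set.mem_preimage, Set.mem_pi, Set.mem_univ, forall_true_left]
    constructor
    · intro hf j
      rcases eq_or_ne j i with rfl | hj
      · simpa using hf
      · simp [Function.update_of_ne hj]
    · intro hf
      have := hf i
      simpa using this
  rw [h1, Measure.pi_pi,
    Finset.prod_eq_single i (fun b _ hb => by simp [Function.update_of_ne hb])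
      (fun h => absurd (Finset.mem_univ i) h)]
  simp

lemma smoothed_eq (σ : ℝ) (d : ℕ) (i : Fin d) (S : Set ℝ) (hS : MeasurableSet S)
    (f : EuclideanSpace ℝ (Fin d) → ℝ)
    (hf : ∀ z, f z = Set.indicator S (1 : ℝ → ℝ) (z i))
    (x : EuclideanSpace ℝ (Fin d)) :
    smoothed σ d f x =
      ((gaussianReal 0 (Real.toNNReal (σ ^ 2))) {t : ℝ | x i + t ∈ S}).toReal := by
  set ν := gaussianReal 0 (Real.toNNReal (σ ^ 2)) with hν
  set T : Set ℝ := {t : ℝ | x i + t ∈ S} with hT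
  have hTm : MeasurableSet T := hS.preimage (measurable_const_add (x i))
  unfold smoothed gaussPi
  rw [MeasureTheory.integral_map_equiv]
  have hfun : ∀ ε : Fin d → ℝ,
      f (x + (MeasurableEquiv.toLp 2 (Fin d → ℝ)) ε)
        = Set.indicator T (1 : ℝ → ℝ) (ε i) := by
    intro ε
    rw [hf]
    have hc : (x + (MeasurableEquiv.toLp 2 (Fin d → ℝ)) ε) i = x i + ε i := rfl
    rw [hc]
    by_cases h : x i + ε i ∈ S <;> simp [Set.indicator_apply, h, hT]
  simp_rw [hfun]
  have hmap := MeasureTheory.integral_map (μ := Measure.pi fun _ : Fin d => ν)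
    (φ := fun (g : Fin d → ℝ) => g i) (measurable_pi_apply i).aemeasurable
    (f := fun t => Set.indicator T (1 : ℝ → ℝ) t)
    ((measurable_const.indicator hTm).aestronglyMeasurable)
  rw [pi_map_eval] at hmap
  rw [← hmap, integral_indicator_one hTm]
  rfl

lemma hasDerivAt_PhiShift {σ : ℝ} (hσ : 0 < σ) (y : ℝ) :
    HasDerivAt (fun s => PhiShift (s / σ) y) (-σ⁻¹ * pdfAtQuantile y) 0 := by
  unfold PhiShift pdfAtQuantile
  by_cases h1 : y ≤ 0
  · simp only [h1, if_true, mul_zero]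
    exact hasDerivAt_const _ _
  by_cases h2 : 1 ≤ y
  · simp only [h1, h2, if_true, if_false, mul_zero]
    exact hasDerivAt_const _ _
  simp only [h1, h2, if_false]
  have hinner : HasDerivAt (fun s : ℝ => PhiInv y - s / σ) (-σ⁻¹) 0 := by
    simpa [one_div] using ((hasDerivAt_id (0:ℝ)).div_const σ).const_sub (PhiInv y)
  have hcomp := (hasDerivAt_Phi (PhiInv y - 0 / σ)).comp 0 hinner
  simpa [mul_comm, Function.comp_def] using hcomp


/-- tightness: the slab classifier attains the second-order bound:
for the base classifier `f*(z) = 1 iff σΦ⁻¹(a) ≤ z₁ ≤ σΦ⁻¹(a+C)` (with the conventions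
`Φ⁻¹(0) = -∞`, `Φ⁻¹(1) = +∞`), the smoothed function satisfies `p(0) = C`,
`∇p(0) = -σ⁻¹(Φ'(Φ⁻¹(a+C)) - Φ'(Φ⁻¹(a))) e₁`, and
`p(ρe₁) = Φ(Φ⁻¹(a+C) - ρ/σ) - Φ(Φ⁻¹(a) - ρ/σ)` for every `ρ ≥ 0`. -/
theorem slab_classifier_attains_bound (d : ℕ) (hd : 0 < d) (σ a C : ℝ)
    (hσ : 0 < σ) (ha : 0 ≤ a) (hC : 0 < C) (haC : a + C ≤ 1)
    (fstar : EuclideanSpace ℝ (Fin d) → ℝ)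
    (hfstar : ∀ z, fstar z =
      if (a ≤ 0 ∨ σ * PhiInv a ≤ z ⟨0, hd⟩) ∧ (1 ≤ a + C ∨ z ⟨0, hd⟩ ≤ σ * PhiInv (a + C))
      then 1 else 0) :
    smoothed σ d fstar 0 = C ∧
    gradient (smoothed σ d fstar) 0 =
      (-σ⁻¹ * (pdfAtQuantile (a + C) - pdfAtQuantile a)) • EuclideanSpace.single ⟨0, hd⟩ (1 : ℝ) ∧
    ∀ ρ : ℝ, 0 ≤ ρ →
      smoothed σ d fstar (ρ • EuclideanSpace.single ⟨0, hd⟩ (1 : ℝ)) =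
        PhiShift (ρ / σ) (a + C) - PhiShift (ρ / σ) a := by
  have haC0 : 0 < a + C := by linarith
  have haC0' : ¬ (a + C ≤ 0) := not_le.2 haC0
  set S : Set ℝ :=
    {u : ℝ | (a ≤ 0 ∨ σ * PhiInv a ≤ u) ∧ (1 ≤ a + C ∨ u ≤ σ * PhiInv (a + C))} with hSdef
  have hSm : MeasurableSet S := by
    have : S = ({u : ℝ | a ≤ 0} ∪ Set.Ici (σ * PhiInv a)) ∩
        ({u : ℝ | 1 ≤ a + C} ∪ Set.Iic (σ * PhiInv (a + C))) := rfl
    rw [this]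
    exact ((MeasurableSet.const _).union measurableSet_Ici).inter
      ((MeasurableSet.const _).union measurableSet_Iic)
  have hfInd : ∀ z, fstar z = Set.indicator S (1 : ℝ → ℝ) (z ⟨0, hd⟩) := by
    intro z
    rw [hfstar z]
    by_cases h : (a ≤ 0 ∨ σ * PhiInv a ≤ z ⟨0, hd⟩) ∧
        (1 ≤ a + C ∨ z ⟨0, hd⟩ ≤ σ * PhiInv (a + C))
    · rw [if_pos h, Set.indicator_of_mem (show z ⟨0, hd⟩ ∈ S from h) (1 : ℝ → ℝ)]; rfl
    · rw [if_neg h, Set.indicator_of_notMem (show z ⟨0, hd⟩ ∉ S from h) (1 : ℝ → ℝ)]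
  have hkey : ∀ x : EuclideanSpace ℝ (Fin d), smoothed σ d fstar x =
      PhiShift (x ⟨0, hd⟩ / σ) (a + C) - PhiShift (x ⟨0, hd⟩ / σ) a := by
    intro x
    rw [smoothed_eq σ d ⟨0, hd⟩ S hSm fstar hfInd x]
    set x0 := x ⟨0, hd⟩ with hx0
    by_cases h1 : a ≤ 0 <;> by_cases h2 : 1 ≤ a + C
    · have hset : {t : ℝ | x0 + t ∈ S} = Set.univ := by
        ext t
        simp only [hSdef, Set.mem_setOf_eq, Set.mem_univ, iff_true]
        exact ⟨Or.inl h1, Or.inl h2⟩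
      rw [hset, measure_univ, ENNReal.toReal_one]
      unfold PhiShift
      rw [if_neg haC0', if_pos h2, if_pos h1]
      norm_num
    · have hset : {t : ℝ | x0 + t ∈ S} = Set.Iic (σ * PhiInv (a + C) - x0) := by
        ext t
        simp only [hSdef, Set.mem_setOf_eq, Set.mem_Iic]
        constructor
        · rintro ⟨-, h | h⟩
          · exact absurd h h2
          · linarith
        · intro h
          exact ⟨Or.inl h1, Or.inr (by linarith)⟩
      rw [hset, nu_Iic hσ]
      have hdiv : (σ * PhiInv (a + C) - x0) / σ = PhiInv (a + C) - x0 / σ := by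
        field_simp
      rw [hdiv]
      unfold PhiShift
      rw [if_neg haC0', if_neg h2, if_pos h1]
      norm_num
    · have hset : {t : ℝ | x0 + t ∈ S} = Set.Ici (σ * PhiInv a - x0) := by
        ext t
        simp only [hSdef, Set.mem_setOf_eq, Set.mem_Ici]
        constructor
        · rintro ⟨h | h, -⟩
          · exact absurd h h1
          · linarith
        · intro h
          exact ⟨Or.inr (by linarith), Or.inl h2⟩
      rw [hset, nu_Ici hσ]
      have hdiv : (σ * PhiInv a - x0) / σ = PhiInv a - x0 / σ := by field_simp
      rw [hdiv]
      unfold PhiShift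
      rw [if_neg haC0', if_pos h2, if_neg h1, if_neg (not_le.2 (by linarith : a < 1))]
    · have hLU : PhiInv a ≤ PhiInv (a + C) := by
        by_contra hc
        push_neg at hc
        have hm := monotone_Phi hc.le
        rw [Phi_phiInv (lt_of_not_ge h1) (by linarith), Phi_phiInv haC0 (lt_of_not_ge h2)] at hm
        linarith
      have hset : {t : ℝ | x0 + t ∈ S}
          = Set.Icc (σ * PhiInv a - x0) (σ * PhiInv (a + C) - x0) := by
        ext t
        simp only [hSdef, Set.mem_setOf_eq, Set.mem_Icc]
        constructor
        · rintro ⟨h | h, h' | h'⟩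
          · exact absurd h h1
          · exact absurd h h1
          · exact absurd h' h2
          · exact ⟨by linarith, by linarith⟩
        · rintro ⟨h, h'⟩
          exact ⟨Or.inr (by linarith), Or.inr (by linarith)⟩
      rw [hset, nu_Icc hσ (by nlinarith)]
      have hdiv : (σ * PhiInv (a + C) - x0) / σ = PhiInv (a + C) - x0 / σ := by field_simp
      have hdiv' : (σ * PhiInv a - x0) / σ = PhiInv a - x0 / σ := by field_simp
      rw [hdiv, hdiv']
      unfold PhiShift
      rw [if_neg haC0', if_neg h2, if_neg h1, if_neg (not_le.2 (by linarith : a < 1))]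
  refine ⟨?_, ?_, ?_⟩
  · rw [hkey 0]
    have h00 : (0 : EuclideanSpace ℝ (Fin d)) ⟨0, hd⟩ = 0 := rfl
    rw [h00, zero_div]
    unfold PhiShift
    by_cases h1 : a ≤ 0 <;> by_cases h2 : 1 ≤ a + C
    · rw [if_neg haC0', if_pos h2, if_pos h1]
      have : a = 0 := le_antisymm h1 ha
      linarith
    · rw [if_neg haC0', if_neg h2, if_pos h1, sub_zero, sub_zero,
        Phi_phiInv haC0 (lt_of_not_ge h2)]
      have : a = 0 := le_antisymm h1 ha
      linarith
    · rw [if_neg haC0', if_pos h2, if_neg h1, if_neg (not_le.2 (by linarith : a < 1)),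
        sub_zero, Phi_phiInv (lt_of_not_ge h1) (by linarith)]
      linarith
    · rw [if_neg haC0', if_neg h2, if_neg h1, if_neg (not_le.2 (by linarith : a < 1)),
        sub_zero, sub_zero, Phi_phiInv haC0 (lt_of_not_ge h2),
        Phi_phiInv (lt_of_not_ge h1) (by linarith)]
      ring
  · have hfuneq : smoothed σ d fstar = fun y : EuclideanSpace ℝ (Fin d) =>
        PhiShift (y ⟨0, hd⟩ / σ) (a + C) - PhiShift (y ⟨0, hd⟩ / σ) a := funext hkey
    have hG : HasDerivAt (fun s : ℝ => PhiShift (s / σ) (a + C) - PhiShift (s / σ) a)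
        (-σ⁻¹ * (pdfAtQuantile (a + C) - pdfAtQuantile a)) 0 := by
      have h := (hasDerivAt_PhiShift hσ (a + C)).sub (hasDerivAt_PhiShift hσ a)
      rw [show -σ⁻¹ * (pdfAtQuantile (a + C) - pdfAtQuantile a)
        = -σ⁻¹ * pdfAtQuantile (a + C) - -σ⁻¹ * pdfAtQuantile a by ring]
      exact h
    have hπ : HasFDerivAt (fun y : EuclideanSpace ℝ (Fin d) => y ⟨0, hd⟩)
        ((EuclideanSpace.proj (⟨0, hd⟩ : Fin d) : EuclideanSpace ℝ (Fin d) →L[ℝ] ℝ)) 0 :=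
      ((EuclideanSpace.proj (⟨0, hd⟩ : Fin d) : EuclideanSpace ℝ (Fin d) →L[ℝ] ℝ)).hasFDerivAt
    have hcomp : HasFDerivAt (smoothed σ d fstar)
        ((-σ⁻¹ * (pdfAtQuantile (a + C) - pdfAtQuantile a)) •
          (EuclideanSpace.proj (⟨0, hd⟩ : Fin d) : EuclideanSpace ℝ (Fin d) →L[ℝ] ℝ)) 0 := by
      rw [hfuneq]
      exact hG.comp_hasFDerivAt 0 hπ
    have hdual : (InnerProductSpace.toDual ℝ (EuclideanSpace ℝ (Fin d)))
        ((-σ⁻¹ * (pdfAtQuantile (a + C) - pdfAtQuantile a)) •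
          EuclideanSpace.single ⟨0, hd⟩ (1 : ℝ))
        = (-σ⁻¹ * (pdfAtQuantile (a + C) - pdfAtQuantile a)) •
          (EuclideanSpace.proj (⟨0, hd⟩ : Fin d) : EuclideanSpace ℝ (Fin d) →L[ℝ] ℝ) := by
      apply ContinuousLinearMap.ext
      intro v
      simp [InnerProductSpace.toDual_apply_apply, real_inner_smul_left,
        EuclideanSpace.inner_single_left]
    have hgrad : HasGradientAt (smoothed σ d fstar)
        ((-σ⁻¹ * (pdfAtQuantile (a + C) - pdfAtQuantile a)) •
          EuclideanSpace.single ⟨0, hd⟩ (1 : ℝ)) 0 := by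
      rw [hasGradientAt_iff_hasFDerivAt, hdual]
      exact hcomp
    exact hgrad.gradient
  · intro ρ _
    rw [hkey]
    have hcoord : ((ρ • EuclideanSpace.single ⟨0, hd⟩ (1 : ℝ) : EuclideanSpace ℝ (Fin d))) (⟨0, hd⟩ : Fin d) = ρ := by
      simp [EuclideanSpace.single_apply]
    rw [hcoord]
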